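/- Let n be a natural number and let S, T be subspaces of ℂⁿ such that 2 · dim α(S,T) = n, where α(S,T) = ((T ⊔ Sᗮ) ⊓ S) ⊓ (S ⊓ T)ᗮ. Then 2 · dim S = n, 2 · dim T = n, S ⊓ T = ⊥, and S ⊓ Tᗮ = ⊥. -/

import Mathlib

open Module Submodule

/-- In a finite-dimensional inner product space, if `U ≤ V` then
`dim (V ⊓ Uᗮ) + dim U = dim V`. -/
lemma aux_finrank_inf_orthogonal_of_le {n : ℕ}
    {U V : Submodule ℂ (EuclideanSpace ℂ (Fin n))} (hUV : U ≤ V) :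
    finrank ℂ (V ⊓ Uᗮ : Submodule ℂ (EuclideanSpace ℂ (Fin n))) + finrank ℂ U
      = finrank ℂ V := by
  have hn : finrank ℂ U + finrank ℂ Uᗮ = n := by
    simpa [finrank_euclideanSpace_fin] using U.finrank_add_finrank_orthogonal
  -- upper bound
  have h1 := Submodule.finrank_sup_add_finrank_inf_eq (V ⊓ Uᗮ) U
  have hbot : (V ⊓ Uᗮ) ⊓ U = ⊥ := by
    rw [eq_bot_iff]
    intro z hz
    exact (U.orthogonal_disjoint.symm.le_bot) ⟨hz.1.2, hz.2⟩
  rw [hbot] at h1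
  simp only [finrank_bot, add_zero] at h1
  have h2 : finrank ℂ ((V ⊓ Uᗮ) ⊔ U : Submodule ℂ (EuclideanSpace ℂ (Fin n)))
      ≤ finrank ℂ V := Submodule.finrank_mono (sup_le inf_le_left hUV)
  -- lower bound
  have h3 := Submodule.finrank_sup_add_finrank_inf_eq V Uᗮ
  have h4 : finrank ℂ (V ⊔ Uᗮ : Submodule ℂ (EuclideanSpace ℂ (Fin n))) ≤ n := by
    simpa [finrank_euclideanSpace_fin] using
      (Submodule.finrank_le (V ⊔ Uᗮ : Submodule ℂ (EuclideanSpace ℂ (Fin n))))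
  omega

/-- If `2 · dim α(S,T) = n` with `α(S,T) = ((T ⊔ Sᗮ) ⊓ S) ⊓ (S ⊓ T)ᗮ`, then
`2 · dim S = n`, `2 · dim T = n`, `S ⊓ T = ⊥` and `S ⊓ Tᗮ = ⊥`. -/
theorem stmt_8 (n : ℕ) (S T : Submodule ℂ (EuclideanSpace ℂ (Fin n)))
    (h : 2 * Module.finrank ℂ
        ((((T ⊔ Sᗮ) ⊓ S) ⊓ (S ⊓ T)ᗮ) : Submodule ℂ (EuclideanSpace ℂ (Fin n))) = n) :
    2 * Module.finrank ℂ S = n ∧ 2 * Module.finrank ℂ T = n ∧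
      S ⊓ T = ⊥ ∧ S ⊓ Tᗮ = ⊥ := by
  have hSorth : finrank ℂ S + finrank ℂ Sᗮ = n := by
    simpa [finrank_euclideanSpace_fin] using S.finrank_add_finrank_orthogonal
  -- ====== Fact B : a + x + t = u ======
  have hST_le_P : S ⊓ T ≤ (T ⊔ Sᗮ) ⊓ S :=
    le_inf (le_trans inf_le_right le_sup_left) inf_le_left
  have hBa := aux_finrank_inf_orthogonal_of_le hST_le_P
  have hPrank : finrank ℂ ((T ⊔ Sᗮ) ⊓ S : Submodule ℂ (EuclideanSpace ℂ (Fin n)))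
      + finrank ℂ (T ⊓ Sᗮ : Submodule ℂ (EuclideanSpace ℂ (Fin n))) = finrank ℂ T := by
    have h1 := Submodule.finrank_sup_add_finrank_inf_eq (T ⊔ Sᗮ) S
    have htop : (T ⊔ Sᗮ) ⊔ S = ⊤ := by
      rw [sup_assoc, sup_comm Sᗮ S, Submodule.sup_orthogonal_of_hasOrthogonalProjection]
      simp
    rw [htop] at h1
    have h2 := Submodule.finrank_sup_add_finrank_inf_eq T Sᗮ
    have h3 : finrank ℂ (⊤ : Submodule ℂ (EuclideanSpace ℂ (Fin n))) = n := by
      simp [finrank_top, finrank_euclideanSpace_fin]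
    have h4 : finrank ℂ (T ⊔ Sᗮ : Submodule ℂ (EuclideanSpace ℂ (Fin n))) ≤ n := by
      simpa [finrank_euclideanSpace_fin] using
        (Submodule.finrank_le (T ⊔ Sᗮ : Submodule ℂ (EuclideanSpace ℂ (Fin n))))
    omega
  -- ====== Fact A : a + x + y ≤ s ======
  have hA_le_S : ((T ⊔ Sᗮ) ⊓ S) ⊓ (S ⊓ T)ᗮ ≤ S := le_trans inf_le_left inf_le_right
  have hfactA : finrank ℂ ((((T ⊔ Sᗮ) ⊓ S) ⊓ (S ⊓ T)ᗮ) : Submodule ℂ (EuclideanSpace ℂ (Fin n)))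
      + finrank ℂ (S ⊓ T : Submodule ℂ (EuclideanSpace ℂ (Fin n)))
      + finrank ℂ (S ⊓ Tᗮ : Submodule ℂ (EuclideanSpace ℂ (Fin n))) ≤ finrank ℂ S := by
    have hW1 : S ⊓ T ≤ (((T ⊔ Sᗮ) ⊓ S) ⊓ (S ⊓ T)ᗮ)ᗮ := by
      calc S ⊓ T = (S ⊓ T)ᗮᗮ := ((S ⊓ T).orthogonal_orthogonal).symm
        _ ≤ _ := Submodule.orthogonal_le inf_le_right
    have hW2 : Sᗮ ≤ (((T ⊔ Sᗮ) ⊓ S) ⊓ (S ⊓ T)ᗮ)ᗮ := Submodule.orthogonal_le hA_le_S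
    have hW3 : S ⊓ Tᗮ ≤ (((T ⊔ Sᗮ) ⊓ S) ⊓ (S ⊓ T)ᗮ)ᗮ := by
      have hA' : ((T ⊔ Sᗮ) ⊓ S) ⊓ (S ⊓ T)ᗮ ≤ T ⊔ Sᗮ := le_trans inf_le_left inf_le_left
      refine le_trans ?_ (Submodule.orthogonal_le hA')
      intro z hz
      rw [Submodule.mem_orthogonal]
      intro w hw
      rcases Submodule.mem_sup.mp hw with ⟨w1, hw1, w2, hw2, rfl⟩
      have e1 : inner ℂ w1 z = (0 : ℂ) := (Submodule.mem_orthogonal T z).mp hz.2 w1 hw1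
      have e2 : inner ℂ w2 z = (0 : ℂ) := (Submodule.mem_orthogonal Sᗮ z).mp
        (S.le_orthogonal_orthogonal hz.1) w2 hw2
      rw [inner_add_left, e1, e2, add_zero]
    have hd1 : finrank ℂ ((S ⊓ T) ⊔ (S ⊓ Tᗮ) : Submodule ℂ (EuclideanSpace ℂ (Fin n)))
        = finrank ℂ (S ⊓ T : Submodule ℂ (EuclideanSpace ℂ (Fin n)))
          + finrank ℂ (S ⊓ Tᗮ : Submodule ℂ (EuclideanSpace ℂ (Fin n))) := by
      have h1 := Submodule.finrank_sup_add_finrank_inf_eq (S ⊓ T) (S ⊓ Tᗮ)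
      have hbot : (S ⊓ T) ⊓ (S ⊓ Tᗮ) = ⊥ := by
        rw [eq_bot_iff]
        intro z hz
        exact (T.orthogonal_disjoint.le_bot) ⟨hz.1.2, hz.2.2⟩
      rw [hbot] at h1
      simpa using h1
    have hd2 : finrank ℂ (Sᗮ ⊔ ((S ⊓ T) ⊔ (S ⊓ Tᗮ)) : Submodule ℂ (EuclideanSpace ℂ (Fin n)))
        = finrank ℂ Sᗮ + (finrank ℂ (S ⊓ T : Submodule ℂ (EuclideanSpace ℂ (Fin n)))
          + finrank ℂ (S ⊓ Tᗮ : Submodule ℂ (EuclideanSpace ℂ (Fin n)))) := by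
      have h1 := Submodule.finrank_sup_add_finrank_inf_eq Sᗮ ((S ⊓ T) ⊔ (S ⊓ Tᗮ))
      have hbot : Sᗮ ⊓ ((S ⊓ T) ⊔ (S ⊓ Tᗮ)) = ⊥ := by
        rw [eq_bot_iff]
        intro z hz
        have hzS : z ∈ S := (sup_le inf_le_left inf_le_left : (S ⊓ T) ⊔ (S ⊓ Tᗮ) ≤ S) hz.2
        exact (S.orthogonal_disjoint.symm.le_bot) ⟨hz.1, hzS⟩
      rw [hbot, hd1] at h1
      simpa using h1
    have hmono := Submodule.finrank_mono (sup_le hW2 (sup_le hW1 hW3))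
    rw [hd2] at hmono
    have hAorth : finrank ℂ ((((T ⊔ Sᗮ) ⊓ S) ⊓ (S ⊓ T)ᗮ) : Submodule ℂ (EuclideanSpace ℂ (Fin n)))
        + finrank ℂ ((((T ⊔ Sᗮ) ⊓ S) ⊓ (S ⊓ T)ᗮ)ᗮ : Submodule ℂ (EuclideanSpace ℂ (Fin n))) = n := by
      simpa [finrank_euclideanSpace_fin] using
        (((T ⊔ Sᗮ) ⊓ S) ⊓ (S ⊓ T)ᗮ).finrank_add_finrank_orthogonal
    omega
  -- ====== Fact C : s + u ≤ 2a + x ======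
  have hfactC := Submodule.finrank_sup_add_finrank_inf_eq S T
  have hfactC2 : finrank ℂ (S ⊔ T : Submodule ℂ (EuclideanSpace ℂ (Fin n))) ≤ n := by
    simpa [finrank_euclideanSpace_fin] using
      (Submodule.finrank_le (S ⊔ T : Submodule ℂ (EuclideanSpace ℂ (Fin n))))
  -- ====== Combine ======
  have key : finrank ℂ (S ⊓ T : Submodule ℂ (EuclideanSpace ℂ (Fin n))) = 0 ∧
      finrank ℂ (S ⊓ Tᗮ : Submodule ℂ (EuclideanSpace ℂ (Fin n))) = 0 ∧
      2 * finrank ℂ S = n ∧ 2 * finrank ℂ T = n := by omega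
  obtain ⟨k1, k2, k3, k4⟩ := key
  exact ⟨k3, k4, Submodule.finrank_eq_zero.mp k1, Submodule.finrank_eq_zero.mp k2⟩
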